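/- Let n, a, b, c, p, q, r be positive integers with n = p·a = q·b = r·c. Then the following are equivalent: (1) there exist permutations x, y of Fin n such that every orbit of x has size a, every orbit of y has size b, every orbit of (x*y)⁻¹ has size c, the subgroup of Equiv.Perm (Fin n) generated by x and y acts transitively on Fin n, and this subgroup has cardinality n (the uniform passport [a^p, b^q, c^r] admits a regular dessin); (2) there exist a finite group G with Fintype.card G = n and elements u, v ∈ G such that orderOf u = a, orderOf v = b, orderOf (u*v) = c, and G is generated by u and v. -/
import Mathlib


/-- The orbit of `e` under the permutation `σ`: `{σ^k e : k ∈ ℤ}`. -/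
def permOrbit {E : Type*} (σ : Equiv.Perm E) (e : E) : Set E :=
  {f | ∃ k : ℤ, (σ ^ k) e = f}

/-- Every orbit of `σ` has exactly `a` elements. -/
def allOrbitsSize {E : Type*} (σ : Equiv.Perm E) (a : ℕ) : Prop :=
  ∀ e : E, (permOrbit σ e).ncard = a


lemma permOrbit_inv {E : Type*} (σ : Equiv.Perm E) (e : E) :
    permOrbit σ⁻¹ e = permOrbit σ e := by
  ext f
  constructor
  · rintro ⟨k, rfl⟩
    exact ⟨-k, by rw [zpow_neg, ← inv_zpow]⟩
  · rintro ⟨k, rfl⟩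
    exact ⟨-k, by rw [zpow_neg, inv_zpow, inv_inv]⟩

lemma permOrbit_eq_orbit {E : Type*} (σ : Equiv.Perm E) (e : E) :
    permOrbit σ e = MulAction.orbit (Subgroup.zpowers σ) e := by
  ext f
  constructor
  · rintro ⟨k, rfl⟩
    exact ⟨⟨σ ^ k, Subgroup.zpow_mem _ (Subgroup.mem_zpowers σ) k⟩, rfl⟩
  · rintro ⟨⟨g, hg⟩, rfl⟩
    obtain ⟨k, rfl⟩ := hg
    exact ⟨k, rfl⟩

lemma ncard_permOrbit {E : Type*} (σ : Equiv.Perm E) (e : E) :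
    (permOrbit σ e).ncard = Function.minimalPeriod σ e := by
  rw [permOrbit_eq_orbit, ← Nat.card_coe_set_eq,
    Nat.card_congr (MulAction.orbitZPowersEquiv σ e), Nat.card_zmod]
  congr 1

lemma orderOf_eq_of_allOrbitsSize {E : Type*} [Fintype E] [Nonempty E]
    {σ : Equiv.Perm E} {a : ℕ} (h : allOrbitsSize σ a) : orderOf σ = a := by
  have key : ∀ e : E, Function.minimalPeriod σ e = a := fun e => by
    rw [← ncard_permOrbit]; exact h e
  refine Nat.dvd_antisymm ?_ ?_
  · apply orderOf_dvd_of_pow_eq_one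
    ext e
    rw [Equiv.Perm.coe_pow, Equiv.Perm.coe_one, ← key e]
    exact Function.iterate_minimalPeriod
  · obtain ⟨e⟩ := ‹Nonempty E›
    rw [← key e]
    apply Function.IsPeriodicPt.minimalPeriod_dvd
    rw [Function.IsPeriodicPt, Function.IsFixedPt, ← Equiv.Perm.coe_pow,
      pow_orderOf_eq_one]
    rfl

/-- The Cayley embedding of `G` into permutations of `Fin n`, via an equivalence. -/
def cayleyHom {G : Type} [Group G] {n : ℕ} (e : G ≃ Fin n) : G →* Equiv.Perm (Fin n) where
  toFun w := (e.symm.trans (Equiv.mulLeft w)).trans e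
  map_one' := by ext f; simp
  map_mul' w₁ w₂ := by ext f; simp [mul_assoc]

lemma cayleyHom_apply {G : Type} [Group G] {n : ℕ} (e : G ≃ Fin n) (w : G) (f : Fin n) :
    cayleyHom e w f = e (w * e.symm f) := rfl

lemma cayleyHom_injective {G : Type} [Group G] {n : ℕ} (e : G ≃ Fin n) :
    Function.Injective (cayleyHom e) := by
  intro w w' h
  have := congrArg (fun σ : Equiv.Perm (Fin n) => e.symm (σ (e 1))) h
  simpa [cayleyHom_apply] using this

lemma permOrbit_cayley {G : Type} [Group G] {n : ℕ} (e : G ≃ Fin n) (w : G) (g : G) :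
    permOrbit (cayleyHom e w) (e g) = e '' ((fun h => h * g) '' (Subgroup.zpowers w : Set G)) := by
  ext f
  constructor
  · rintro ⟨k, rfl⟩
    refine ⟨w ^ k * g, ⟨w ^ k, ⟨k, rfl⟩, rfl⟩, ?_⟩
    rw [← map_zpow, cayleyHom_apply, Equiv.symm_apply_apply]
  · rintro ⟨-, ⟨-, ⟨k, rfl⟩, rfl⟩, rfl⟩
    exact ⟨k, by rw [← map_zpow, cayleyHom_apply, Equiv.symm_apply_apply]⟩

lemma allOrbitsSize_cayley {G : Type} [Group G] {n : ℕ} (e : G ≃ Fin n) (w : G) :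
    allOrbitsSize (cayleyHom e w) (orderOf w) := by
  intro f
  have : f = e (e.symm f) := (e.apply_symm_apply f).symm
  rw [this, permOrbit_cayley,
    Set.ncard_image_of_injective _ e.injective,
    Set.ncard_image_of_injective _ (mul_left_injective (e.symm f)),
    ← Nat.card_coe_set_eq]
  exact Nat.card_zpowers w

/-- A uniform passport `[a^p, b^q, c^r]` admits a regular dessin iff there is an
abstract group of order `n` generated by elements `u, v` with
`orderOf u = a`, `orderOf v = b`, `orderOf (u*v) = c`. -/
theorem regular_iff_abstract_group (n a b c p q r : ℕ)
    (ha : 0 < a) (hb : 0 < b) (hc : 0 < c) (hp : 0 < p) (hq : 0 < q) (hr : 0 < r)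
    (hpa : n = p * a) (hqb : n = q * b) (hrc : n = r * c) :
    (∃ x y : Equiv.Perm (Fin n),
      allOrbitsSize x a ∧ allOrbitsSize y b ∧ allOrbitsSize (x * y)⁻¹ c ∧
      (∀ e f : Fin n,
        ∃ g ∈ Subgroup.closure ({x, y} : Set (Equiv.Perm (Fin n))), g e = f) ∧
      Nat.card (Subgroup.closure ({x, y} : Set (Equiv.Perm (Fin n)))) = n) ↔
    (∃ (G : Type) (_ : Group G) (_ : Fintype G), Fintype.card G = n ∧
      ∃ u v : G, orderOf u = a ∧ orderOf v = b ∧ orderOf (u * v) = c ∧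
        Subgroup.closure ({u, v} : Set G) = ⊤) := by
  have hn : 0 < n := hpa ▸ Nat.mul_pos hp ha
  constructor
  · rintro ⟨x, y, hx, hy, hxy, htrans, hcard⟩
    haveI : Nonempty (Fin n) := ⟨⟨0, hn⟩⟩
    set H := Subgroup.closure ({x, y} : Set (Equiv.Perm (Fin n))) with hH
    haveI : Fintype H := Fintype.ofFinite H
    have hxmem : x ∈ H := Subgroup.subset_closure (by simp)
    have hymem : y ∈ H := Subgroup.subset_closure (by simp)
    have hxa : orderOf x = a := orderOf_eq_of_allOrbitsSize hx
    have hyb : orderOf y = b := orderOf_eq_of_allOrbitsSize hy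
    have hxyc : orderOf (x * y) = c := by
      apply orderOf_eq_of_allOrbitsSize
      intro e
      rw [← permOrbit_inv]
      exact hxy e
    refine ⟨H, inferInstance, inferInstance,
      by rw [← Nat.card_eq_fintype_card]; exact hcard,
      ⟨x, hxmem⟩, ⟨y, hymem⟩, by simpa using hxa, by simpa using hyb, ?_, ?_⟩
    · have h1 : (⟨x, hxmem⟩ * ⟨y, hymem⟩ : H) = ⟨x * y, mul_mem hxmem hymem⟩ := rfl
      rw [h1, Subgroup.orderOf_mk]; exact hxyc
    · apply Subgroup.map_injective H.subtype_injective
      rw [MonoidHom.map_closure, Set.image_pair, ← MonoidHom.range_eq_map,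
        Subgroup.range_subtype]
      exact hH.symm
  · rintro ⟨G, _, _, hcard, u, v, hu, hv, huv, hgen⟩
    have e : G ≃ Fin n := Fintype.equivFinOfCardEq hcard
    refine ⟨cayleyHom e u, cayleyHom e v,
      hu ▸ allOrbitsSize_cayley e u, hv ▸ allOrbitsSize_cayley e v, ?_, ?_, ?_⟩
    · intro f
      rw [permOrbit_inv, ← map_mul]
      exact huv ▸ allOrbitsSize_cayley e (u * v) f
    · intro f1 f2
      refine ⟨cayleyHom e (e.symm f2 * (e.symm f1)⁻¹), ?_, ?_⟩
      · have hmem : e.symm f2 * (e.symm f1)⁻¹ ∈ Subgroup.closure ({u, v} : Set G) :=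
          hgen ▸ Subgroup.mem_top _
        have h2 : cayleyHom e (e.symm f2 * (e.symm f1)⁻¹) ∈
            (Subgroup.closure ({u, v} : Set G)).map (cayleyHom e) :=
          Subgroup.mem_map_of_mem _ hmem
        rwa [MonoidHom.map_closure, Set.image_pair] at h2
      · rw [cayleyHom_apply]
        simp [mul_assoc]
    · have h3 : Subgroup.closure ({cayleyHom e u, cayleyHom e v} : Set _) =
          (cayleyHom e).range := by
        rw [← Set.image_pair, ← MonoidHom.map_closure, hgen, ← MonoidHom.range_eq_map]
      rw [h3]
      calc Nat.card ((cayleyHom e).range)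
          = Nat.card G :=
            (Nat.card_congr (MonoidHom.ofInjective (cayleyHom_injective e)).toEquiv).symm
        _ = n := by rw [Nat.card_eq_fintype_card, hcard]
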